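/- The two-state set S = {ρ_0, |+⟩⟨+|} is unitarily informationally complete: Let d ≥ 1, let λ_0, …, λ_{d−1} be distinct real numbers, let ρ_0 = diag(λ_0, …, λ_{d−1}) be the corresponding diagonal matrix, and let u = (1/√d)·(e_0 + ⋯ + e_{d−1}). If U and V are d×d unitary matrices with U ρ_0 U† = V ρ_0 V† and U (uu†) U† = V (uu†) V†, then U = c·V for some c ∈ ℂ with |c| = 1. -/

import Mathlib

open Matrix

/-- The rank-one (outer-product) matrix `ψψ†`, with entries `ψ_j · conj(ψ_k)`. -/
noncomputable def outerProd {n : Type*} (ψ : n → ℂ) : Matrix n n ℂ :=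
  Matrix.of fun j k => ψ j * star (ψ k)

/-- **The two-state set `S = {ρ₀, |+⟩⟨+|}` is unitarily informationally complete.**
If `ρ₀ = diag(λ₀,…,λ_{d−1})` with distinct real `λ_i`, and `u = (1/√d)(e₀+⋯+e_{d−1})`,
then any two unitaries `U, V` conjugating `ρ₀` and `uu†` identically agree up to a
global phase. -/
theorem two_state_UIC (d : ℕ) (hd : 1 ≤ d) (l : Fin d → ℝ) (hl : Function.Injective l)
    (U V : Matrix (Fin d) (Fin d) ℂ) (hU : Uᴴ * U = 1) (hV : Vᴴ * V = 1)
    (h1 : U * Matrix.diagonal (fun i => (l i : ℂ)) * Uᴴ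
        = V * Matrix.diagonal (fun i => (l i : ℂ)) * Vᴴ)
    (h2 : U * outerProd (fun _ : Fin d => ((1 / Real.sqrt d : ℝ) : ℂ)) * Uᴴ
        = V * outerProd (fun _ : Fin d => ((1 / Real.sqrt d : ℝ) : ℂ)) * Vᴴ) :
    ∃ c : ℂ, ‖c‖ = 1 ∧ U = c • V := by
  have hVV : V * Vᴴ = 1 := mul_eq_one_comm.mp hV
  set D : Matrix (Fin d) (Fin d) ℂ := Matrix.diagonal (fun i => (l i : ℂ)) with hD
  set P : Matrix (Fin d) (Fin d) ℂ :=
    outerProd (fun _ : Fin d => ((1 / Real.sqrt d : ℝ) : ℂ)) with hP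
  set W : Matrix (Fin d) (Fin d) ℂ := Vᴴ * U with hWdef
  have hUVW : U = V * W := by
    rw [hWdef, ← Matrix.mul_assoc, hVV, Matrix.one_mul]
  -- commutation with D
  have hcomm : ∀ (A : Matrix (Fin d) (Fin d) ℂ),
      U * A * Uᴴ = V * A * Vᴴ → W * A = A * W := by
    intro A hA
    have : Vᴴ * (U * A * Uᴴ) * U = Vᴴ * (V * A * Vᴴ) * U := by rw [hA]
    calc W * A = Vᴴ * (U * A * Uᴴ) * U := by
          simp only [hWdef, Matrix.mul_assoc, hU, Matrix.mul_one]
      _ = Vᴴ * (V * A * Vᴴ) * U := this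
      _ = A * W := by
          simp only [hWdef, ← Matrix.mul_assoc, hV, Matrix.one_mul]
  have hWD : W * D = D * W := hcomm D h1
  have hWP : W * P = P * W := hcomm P h2
  -- W is diagonal
  have hdiag : ∀ i j, i ≠ j → W i j = 0 := by
    intro i j hij
    have := congrFun (congrFun hWD i) j
    simp only [hD, Matrix.mul_diagonal, Matrix.diagonal_mul] at this
    have hne : (l j : ℂ) - (l i : ℂ) ≠ 0 := by
      intro h
      exact hij (hl (by exact_mod_cast sub_eq_zero.mp h)).symm
    have : W i j * ((l j : ℂ) - (l i : ℂ)) = 0 := by ring_nf; linear_combination this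
    rcases mul_eq_zero.mp this with h | h
    · exact h
    · exact absurd h hne
  -- the constant entry of P
  have hdpos : (0:ℝ) < Real.sqrt d := Real.sqrt_pos.mpr (by exact_mod_cast hd)
  have hr : ((1 / Real.sqrt d : ℝ) : ℂ) ≠ 0 := by
    simp [Real.sqrt_eq_zero', hdpos.ne', hdpos.not_gt]
  have hPapp : ∀ i j : Fin d, P i j = ((1 / Real.sqrt d : ℝ) : ℂ) * ((1 / Real.sqrt d : ℝ) : ℂ) := by
    intro i j
    simp [hP, outerProd, Complex.conj_ofReal]
  -- all diagonal entries equal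
  have hconst : ∀ i j : Fin d, W i i = W j j := by
    intro i j
    have := congrFun (congrFun hWP i) j
    rw [Matrix.mul_apply, Matrix.mul_apply] at this
    have hL : ∑ k, W i k * P k j = W i i * P i j := by
      apply Finset.sum_eq_single i
      · intro k _ hk; rw [hdiag i k (Ne.symm hk), zero_mul]
      · intro h; exact absurd (Finset.mem_univ i) h
    have hR : ∑ k, P i k * W k j = P i j * W j j := by
      apply Finset.sum_eq_single j
      · intro k _ hk; rw [hdiag k j hk, mul_zero]
      · intro h; exact absurd (Finset.mem_univ j) h
    rw [hL, hR, hPapp i j] at this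
    have hPne : ((1 / Real.sqrt d : ℝ) : ℂ) * ((1 / Real.sqrt d : ℝ) : ℂ) ≠ 0 :=
      mul_ne_zero hr hr
    exact mul_left_cancel₀ hPne (by linear_combination this)
  set i0 : Fin d := ⟨0, hd⟩
  set c : ℂ := W i0 i0 with hc
  -- W = c • 1
  have hWc : W = c • (1 : Matrix (Fin d) (Fin d) ℂ) := by
    ext i j
    by_cases hij : i = j
    · subst hij
      simp [hc, hconst i i0]
    · simp [hdiag i j hij, Matrix.one_apply_ne hij, hij]
  -- norm of c
  have hWW : Wᴴ * W = 1 := by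
    rw [hWdef, Matrix.conjTranspose_mul, Matrix.conjTranspose_conjTranspose,
      Matrix.mul_assoc, ← Matrix.mul_assoc V, hVV, Matrix.one_mul, hU]
  have hnorm : ‖c‖ = 1 := by
    have h11 := congrFun (congrFun hWW i0) i0
    rw [Matrix.mul_apply] at h11
    have : ∑ k, Wᴴ i0 k * W k i0 = star c * c := by
      apply Finset.sum_eq_single i0
      · intro k _ hk
        rw [Matrix.conjTranspose_apply, hdiag k i0 hk, star_zero, zero_mul]
      · intro h; exact absurd (Finset.mem_univ i0) h
    rw [this, Matrix.one_apply_eq] at h11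
    have hns : ((Complex.normSq c : ℝ) : ℂ) = 1 := by
      rw [Complex.normSq_eq_conj_mul_self]; exact h11
    have hns' : Complex.normSq c = 1 := by exact_mod_cast hns
    have hsq : ‖c‖ ^ 2 = 1 := by
      rw [Complex.sq_norm]; exact hns'
    nlinarith [norm_nonneg c]
  refine ⟨c, hnorm, ?_⟩
  rw [hUVW, hWc, Matrix.mul_smul, Matrix.mul_one]
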